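/- Let n ≥ 2 and a ≥ 2√(n-1). Define β_0 = 1/a and β_k = (1 + (n-1)β_{k-1}²)/(a - (n-1)β_{k-1}) − β_{k-1}. Then the sequence (β_k) converges to b = (a − √(a² − 3(n-1)))/(3(n-1)). -/

import Mathlib

set_option maxHeartbeats 2000000 in
theorem stmt_4 (n : ℕ) (hn : 2 ≤ n) (a : ℝ)
    (ha : 2 * Real.sqrt ((n : ℝ) - 1) ≤ a)
    (β : ℕ → ℝ) (h0 : β 0 = 1 / a)
    (hrec : ∀ k : ℕ, β (k + 1) =
      (1 + ((n : ℝ) - 1) * (β k) ^ 2) / (a - ((n : ℝ) - 1) * β k) - β k) :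
    Filter.Tendsto β Filter.atTop
      (nhds ((a - Real.sqrt (a ^ 2 - 3 * ((n : ℝ) - 1))) / (3 * ((n : ℝ) - 1)))) := by
  obtain ⟨m, hm_def⟩ : ∃ m : ℝ, (n : ℝ) - 1 = m := ⟨_, rfl⟩
  rw [hm_def] at ha hrec ⊢
  have hm1 : 1 ≤ m := by
    have : (2 : ℝ) ≤ (n : ℝ) := by exact_mod_cast hn
    linarith [hm_def]
  have hmpos : 0 < m := by linarith
  have hsqm : 1 ≤ Real.sqrt m := by
    rw [show (1:ℝ) = Real.sqrt 1 by simp]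
    exact Real.sqrt_le_sqrt hm1
  have ha2' : (2:ℝ) ≤ a := le_trans (by linarith) ha
  have hapos : 0 < a := by linarith
  have hsqm2 : Real.sqrt m ^ 2 = m := Real.sq_sqrt hmpos.le
  have ha4 : 4 * m ≤ a ^ 2 := by nlinarith [Real.sqrt_nonneg m]
  obtain ⟨s, hs_def⟩ : ∃ s : ℝ, Real.sqrt (a ^ 2 - 3 * m) = s := ⟨_, rfl⟩
  rw [hs_def]
  have hs2 : s ^ 2 = a ^ 2 - 3 * m := by
    rw [← hs_def]; exact Real.sq_sqrt (by linarith)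
  have hs0 : 0 ≤ s := by rw [← hs_def]; exact Real.sqrt_nonneg _
  obtain ⟨b, hb_def⟩ : ∃ b : ℝ, (a - s) / (3 * m) = b := ⟨_, rfl⟩
  rw [hb_def]
  have hm3 : (3 : ℝ) * m ≠ 0 := by positivity
  have hsb : s = a - 3 * m * b := by
    rw [← hb_def]; field_simp; ring
  have hb : 3 * m * b ^ 2 - 2 * a * b + 1 = 0 := by
    nlinarith [hs2, hsb]
  -- invariance: 0 < β k ≤ 1/a
  have hinv : ∀ k, 0 < β k ∧ β k ≤ 1 / a := by
    intro k
    induction k with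
    | zero => rw [h0]; exact ⟨by positivity, le_refl _⟩
    | succ k ih =>
      obtain ⟨h1, h2⟩ := ih
      have h2a : a * β k ≤ 1 := by
        rw [mul_comm]; exact (le_div_iff₀ hapos).mp h2
      have hden : 0 < a - m * β k := by
        nlinarith [mul_le_mul_of_nonneg_left h2a hmpos.le]
      have hform : β (k + 1) = (1 - a * β k + 2 * m * (β k) ^ 2) / (a - m * β k) := by
        rw [hrec k]
        field_simp
        ring
      have hnum : 0 < 1 - a * β k + 2 * m * (β k) ^ 2 := by nlinarith
      constructor
      · rw [hform]; exact div_pos hnum hden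
      · rw [hform, div_le_div_iff₀ hden hapos]
        nlinarith [mul_le_mul_of_nonneg_left h2a (mul_nonneg hmpos.le h1.le),
          mul_nonneg h1.le (by linarith : (0:ℝ) ≤ a ^ 2 - 3 * m)]
  -- key identity
  have hden : ∀ k, 0 < a - m * β k := by
    intro k
    obtain ⟨h1, h2⟩ := hinv k
    have h2a : a * β k ≤ 1 := by rw [mul_comm]; exact (le_div_iff₀ hapos).mp h2
    nlinarith [mul_le_mul_of_nonneg_left h2a hmpos.le]
  have hform : ∀ k, β (k + 1) = (1 - a * β k + 2 * m * (β k) ^ 2) / (a - m * β k) := by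
    intro k
    rw [hrec k]
    rw [div_sub' (hden k).ne']
    ring_nf
  have hkey : ∀ k, β (k + 1) - b = (β k - b) * ((2 * m * β k - s) / (a - m * β k)) := by
    intro k
    have hd := (hden k).ne'
    have hmul : (β (k + 1) - b) * (a - m * β k) = (β k - b) * (2 * m * β k - s) := by
      rw [hform k, sub_mul, div_mul_cancel₀ _ hd]
      linear_combination hb + (β k - b) * hsb
    rw [← eq_div_iff hd] at hmul
    rw [hmul, mul_div_assoc]
  -- contraction constant
  have hama : 0 < a ^ 2 - m := by linarith
  obtain ⟨c, hc_def⟩ : ∃ c : ℝ, max (s * a) (2 * m) / (a ^ 2 - m) = c := ⟨_, rfl⟩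
  have hc0 : 0 ≤ c := by
    rw [← hc_def]
    apply div_nonneg _ hama.le
    exact le_trans (by positivity) (le_max_right _ _)
  have hcM : c * (a ^ 2 - m) = max (s * a) (2 * m) := by
    rw [← hc_def, div_mul_cancel₀ _ hama.ne']
  have hc1 : c < 1 := by
    clear hkey hform hden hinv hrec h0
    rw [← hc_def, div_lt_one hama]
    apply max_lt
    · nlinarith [mul_nonneg hs0 hapos.le]
    · linarith
  -- one-step contraction
  have hstep : ∀ k, |β (k + 1) - b| ≤ c * |β k - b| := by
    intro k
    have hdk := hden k
    have hke := hkey k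
    obtain ⟨h1, h2⟩ := hinv k
    clear hkey hform hden hinv hrec h0
    rw [hke, abs_mul]
    rw [mul_comm c _]
    apply mul_le_mul_of_nonneg_left _ (abs_nonneg _)
    rw [abs_div, abs_of_pos hdk, div_le_iff₀ hdk]
    have h2a : a * β k ≤ 1 := by rw [mul_comm]; exact (le_div_iff₀ hapos).mp h2
    have hM1 : s * a ≤ c * (a ^ 2 - m) := by rw [hcM]; exact le_max_left _ _
    have hM2 : 2 * m ≤ c * (a ^ 2 - m) := by rw [hcM]; exact le_max_right _ _
    have hextra : 0 ≤ c * m * (1 - a * β k) := by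
      apply mul_nonneg (mul_nonneg hc0 hmpos.le); linarith
    rw [abs_le]
    constructor
    · have key : s * a ≤ c * (a - m * β k) * a := by nlinarith [hextra, hM1]
      have hsc : s ≤ c * (a - m * β k) :=
        le_of_mul_le_mul_right (by linarith [key]) hapos
      have h2mb : 0 ≤ 2 * m * β k := by positivity
      linarith
    · have key2 : 2 * m * β k * a ≤ c * (a - m * β k) * a := by
        nlinarith [hextra, hM2,
          mul_le_mul_of_nonneg_left h2a (by positivity : (0:ℝ) ≤ 2 * m)]
      have h2mb : 2 * m * β k ≤ c * (a - m * β k) :=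
        le_of_mul_le_mul_right (by linarith [key2]) hapos
      linarith
  -- geometric bound
  have hiter : ∀ k, |β k - b| ≤ c ^ k * |β 0 - b| := by
    intro k
    induction k with
    | zero => simp
    | succ k ih =>
      calc |β (k + 1) - b| ≤ c * |β k - b| := hstep k
        _ ≤ c * (c ^ k * |β 0 - b|) := mul_le_mul_of_nonneg_left ih hc0
        _ = c ^ (k + 1) * |β 0 - b| := by ring
  have hlim : Filter.Tendsto (fun k => c ^ k * |β 0 - b|) Filter.atTop (nhds 0) := by
    simpa using (tendsto_pow_atTop_nhds_zero_of_lt_one hc0 hc1).mul_const (|β 0 - b|)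
  have habs : Filter.Tendsto (fun k => |β k - b|) Filter.atTop (nhds 0) :=
    squeeze_zero (fun k => abs_nonneg _) hiter hlim
  have hsub : Filter.Tendsto (fun k => β k - b) Filter.atTop (nhds 0) :=
    (tendsto_zero_iff_abs_tendsto_zero _).mpr habs
  have : Filter.Tendsto β Filter.atTop (nhds b) := by
    have := hsub.add_const b
    simpa using this
  exact this
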